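/- For any nonzero x ∈ ℍ^d, the set {x i x^*, x j x^*, x k x^*} is an orthogonal set in ℍ^{d×d} with ⟨xux^*, xvx^*⟩ = ‖x‖⁴ δ_{uv} for u,v ∈ {i,j,k}; consequently the real subspace S(x) := {x z x^* : z ∈ ℍ, Re z = 0} is 3-dimensional with orthogonal basis {x i x^*, x j x^*, x k x^*}. -/

import Mathlib

open Matrix BigOperators

/-- The quaternion units `i, j, k`. -/
def qunit : Fin 3 → Quaternion ℝ := ![⟨0,1,0,0⟩, ⟨0,0,1,0⟩, ⟨0,0,0,1⟩]

/-- The matrix `x z x^*` for `x ∈ ℍ^d`, `z ∈ ℍ`. -/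
noncomputable def xzxStar {d : ℕ} (x : Fin d → Quaternion ℝ) (z : Quaternion ℝ) :
    Matrix (Fin d) (Fin d) (Quaternion ℝ) :=
  fun i j => x i * z * star (x j)

/-- The real inner product `⟨A,B⟩ = Re tr(A^*B)` on `ℍ^{d×d}`. -/
noncomputable def qmInner {d : ℕ} (A B : Matrix (Fin d) (Fin d) (Quaternion ℝ)) : ℝ :=
  (Matrix.trace (Aᴴ * B)).re


lemma sum_re {ι : Type*} (s : Finset ι) (f : ι → Quaternion ℝ) :
    (∑ i ∈ s, f i).re = ∑ i ∈ s, (f i).re := by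
  classical
  induction s using Finset.induction with
  | empty => simp [Quaternion.re_zero]
  | insert _ _ h ih => simp [Finset.sum_insert h, ih]

lemma key_re (u v p q : Quaternion ℝ) :
    ((p * star u * star q) * (q * v * star p)).re
      = (star q * q).re * ((star p * p).re * (star u * v).re) := by
  simp [Quaternion.re_mul, Quaternion.imI_mul, Quaternion.imJ_mul, Quaternion.imK_mul]
  ring

lemma dbl {d : ℕ} (n : Fin d → ℝ) (c : ℝ) :
    (∑ i, ∑ j, n j * (n i * c)) = (∑ i, n i)^2 * c := by
  rw [pow_two, Finset.sum_mul_sum, Finset.sum_mul]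
  rw [Finset.sum_comm]
  exact Finset.sum_congr rfl fun i _ => by
    rw [Finset.sum_mul]; exact Finset.sum_congr rfl fun j _ => by ring

lemma qmInner_eval {d : ℕ} (x : Fin d → Quaternion ℝ) (u v : Quaternion ℝ) :
    qmInner (xzxStar x u) (xzxStar x v)
      = (∑ i, (star (x i) * x i).re) ^ 2 * (star u * v).re := by
  unfold qmInner
  rw [Matrix.trace]
  simp only [Matrix.diag_apply, Matrix.mul_apply, Matrix.conjTranspose_apply, xzxStar]
  rw [sum_re]
  simp only [sum_re]
  rw [← dbl (fun i => (star (x i) * x i).re) ((star u * v).re)]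
  refine Finset.sum_congr rfl fun i _ => Finset.sum_congr rfl fun j _ => ?_
  have h1 : star (x j * u * star (x i)) = x i * star u * star (x j) := by
    rw [StarMul.star_mul, StarMul.star_mul, star_star, ← mul_assoc]
  rw [h1]
  exact key_re u v (x i) (x j)

lemma unit_inner (a b : Fin 3) :
    (star (qunit a) * qunit b).re = if a = b then 1 else 0 := by
  fin_cases a <;> fin_cases b <;> rw [Quaternion.re_mul, Quaternion.re_star, Quaternion.imI_star,
    Quaternion.imJ_star, Quaternion.imK_star] <;> simp [qunit]

lemma xzxStar_smul {d : ℕ} (x : Fin d → Quaternion ℝ) (r : ℝ) (z : Quaternion ℝ) :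
    xzxStar x (r • z) = r • xzxStar x z := by
  refine Matrix.ext fun i j => ?_
  simp [xzxStar, Matrix.smul_apply, mul_smul_comm, smul_mul_assoc]

lemma xzxStar_add {d : ℕ} (x : Fin d → Quaternion ℝ) (z w : Quaternion ℝ) :
    xzxStar x (z + w) = xzxStar x z + xzxStar x w := by
  refine Matrix.ext fun i j => ?_
  simp [xzxStar, mul_add, add_mul]

lemma qdecomp (z : Quaternion ℝ) (hz : z.re = 0) :
    z = z.imI • qunit 0 + z.imJ • qunit 1 + z.imK • qunit 2 := by
  ext
  · rw [Quaternion.re_add, Quaternion.re_add, Quaternion.re_smul, Quaternion.re_smul,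
      Quaternion.re_smul]
    simp [qunit, hz]
  · rw [Quaternion.imI_add, Quaternion.imI_add, Quaternion.imI_smul, Quaternion.imI_smul,
      Quaternion.imI_smul]
    simp [qunit]
  · rw [Quaternion.imJ_add, Quaternion.imJ_add, Quaternion.imJ_smul, Quaternion.imJ_smul,
      Quaternion.imJ_smul]
    simp [qunit]
  · rw [Quaternion.imK_add, Quaternion.imK_add, Quaternion.imK_smul, Quaternion.imK_smul,
      Quaternion.imK_smul]
    simp [qunit]

lemma qmInner_smul' {d : ℕ} (A B : Matrix (Fin d) (Fin d) (Quaternion ℝ)) (r : ℝ) :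
    qmInner A (r • B) = r * qmInner A B := by
  unfold qmInner
  rw [Matrix.mul_smul, Matrix.trace_smul]
  simp

lemma qmInner_sum {d : ℕ} (A : Matrix (Fin d) (Fin d) (Quaternion ℝ))
    {ι : Type*} (s : Finset ι) (f : ι → Matrix (Fin d) (Fin d) (Quaternion ℝ)) :
    qmInner A (∑ i ∈ s, f i) = ∑ i ∈ s, qmInner A (f i) := by
  simp only [qmInner, Matrix.mul_sum, Matrix.trace_sum]
  exact sum_re _ _

/-- For `x ≠ 0`, `{xix^*, xjx^*, xkx^*}` is an orthogonal set with
`⟨xux^*, xvx^*⟩ = ‖x‖⁴ δ_{uv}`, and it is an (orthogonal) basis of the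
3-dimensional real subspace `S(x) = {xzx^* : z ∈ ℍ, Re z = 0}`. -/
theorem xzx_orthogonal_basis (d : ℕ) (x : Fin d → Quaternion ℝ) (hx : x ≠ 0) :
    (∀ a b : Fin 3,
        qmInner (xzxStar x (qunit a)) (xzxStar x (qunit b))
          = if a = b then (∑ i, (star (x i) * x i).re) ^ 2 else 0) ∧
    LinearIndependent ℝ (fun a : Fin 3 => xzxStar x (qunit a)) ∧
    (∀ M : Matrix (Fin d) (Fin d) (Quaternion ℝ),
        (∃ z : Quaternion ℝ, z.re = 0 ∧ M = xzxStar x z)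
          ↔ ∃ c : Fin 3 → ℝ, M = ∑ a, c a • xzxStar x (qunit a)) := by
  set N : ℝ := ∑ i, (star (x i) * x i).re with hNdef
  have part1 : ∀ a b : Fin 3,
      qmInner (xzxStar x (qunit a)) (xzxStar x (qunit b))
        = if a = b then N ^ 2 else 0 := by
    intro a b
    rw [qmInner_eval, unit_inner, ← hNdef]
    split_ifs <;> ring
  have hNpos : 0 < N := by
    have hterm : ∀ a : Quaternion ℝ, (star a * a).re = Quaternion.normSq a := by
      intro a; rw [Quaternion.star_mul_self]; rfl
    obtain ⟨i0, hi0⟩ : ∃ i, x i ≠ 0 := by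
      by_contra h
      push_neg at h
      exact hx (funext h)
    refine Finset.sum_pos' (fun i _ => ?_) ⟨i0, Finset.mem_univ _, ?_⟩
    · rw [hterm]; exact Quaternion.normSq_nonneg
    · rw [hterm]
      rcases lt_or_eq_of_le (Quaternion.normSq_nonneg (a := x i0)) with h | h
      · exact h
      · exact absurd (Quaternion.normSq_eq_zero.mp h.symm) hi0
  have hN2 : N ^ 2 ≠ 0 := pow_ne_zero 2 (ne_of_gt hNpos)
  refine ⟨part1, ?_, ?_⟩
  · rw [Fintype.linearIndependent_iff]
    intro c hc b
    have h0 : qmInner (xzxStar x (qunit b)) (∑ a, c a • xzxStar x (qunit a)) = 0 := by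
      rw [hc]; simp [qmInner, Quaternion.re_zero]
    rw [qmInner_sum] at h0
    simp only [qmInner_smul'] at h0
    have h1 : ∑ a, c a * qmInner (xzxStar x (qunit b)) (xzxStar x (qunit a))
        = c b * N ^ 2 := by
      simp only [part1]
      simp [Finset.sum_ite_eq, mul_ite]
    rw [h1] at h0
    exact (mul_eq_zero.mp h0).resolve_right hN2
  · intro M
    constructor
    · rintro ⟨z, hz, rfl⟩
      refine ⟨![z.imI, z.imJ, z.imK], ?_⟩
      rw [Fin.sum_univ_three]
      simp only [Matrix.cons_val_zero, Matrix.cons_val_one, Matrix.head_cons,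
        Matrix.cons_val_two, Matrix.tail_cons]
      rw [← xzxStar_smul, ← xzxStar_smul, ← xzxStar_smul, ← xzxStar_add, ← xzxStar_add,
        ← qdecomp z hz]
    · rintro ⟨c, rfl⟩
      refine ⟨c 0 • qunit 0 + c 1 • qunit 1 + c 2 • qunit 2, ?_, ?_⟩
      · rw [Quaternion.re_add, Quaternion.re_add, Quaternion.re_smul, Quaternion.re_smul,
          Quaternion.re_smul]
        simp [qunit]
      · rw [Fin.sum_univ_three, xzxStar_add, xzxStar_add, xzxStar_smul, xzxStar_smul,
          xzxStar_smul]
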